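/- (Lemma 2, part o2) Suppose X^n ⊂ ℝ^d (d ≥ 2) is in general position and M(X^n) has affine dimension d. Let z_1 be a point in the interior of M(X^n) with B̃_{z_1} ≠ ∅. Then for every z ∈ B_{z_1} one has U_z ⊆ U_{z_1}. -/
import Mathlib


open scoped RealInnerProductSpace
open MeasureTheory

noncomputable section

/-- `E d` is the Euclidean space `ℝ^d`. -/
abbrev E (d : ℕ) : Type := EuclideanSpace ℝ (Fin d)

/-- A sample `X` of `n` points in `ℝ^d` is in general position if no affine hyperplane
(encoded as `{x | ⟪v, x⟫ = c}` for some `v ≠ 0`) contains more than `d` of the points. -/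
def inGeneralPosition {d n : ℕ} (X : Fin n → E d) : Prop :=
  ∀ v : E d, v ≠ 0 → ∀ c : ℝ, ({i : Fin n | ⟪v, X i⟫ = c} : Set (Fin n)).ncard ≤ d

/-- Number of sample points in the closed halfspace `{z | ⟪u, z⟫ ≤ ⟪u, x⟫}`. -/
def sideCount {d n : ℕ} (X : Fin n → E d) (u x : E d) : ℕ :=
  ({i : Fin n | ⟪u, X i⟫ ≤ ⟪u, x⟫} : Set (Fin n)).ncard

/-- Tukey's halfspace depth of `x` with respect to the sample `X`. -/
def depth {d n : ℕ} (X : Fin n → E d) (x : E d) : ℝ :=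
  sInf {r : ℝ | ∃ u : E d, ‖u‖ = 1 ∧ r = (sideCount X u x : ℝ) / (n : ℝ)}

/-- The maximum Tukey depth `λ*` of the sample `X`. -/
def maxDepth {d n : ℕ} (X : Fin n → E d) : ℝ :=
  sSup (Set.range (depth X))

/-- The set `M(X)` of deepest points. -/
def MSet {d n : ℕ} (X : Fin n → E d) : Set (E d) :=
  {x | depth X x = maxDepth X}

/-- `U_x`: the set of optimal (unit) directions realizing the depth at `x`. -/
def USet {d n : ℕ} (X : Fin n → E d) (x : E d) : Set (E d) :=
  {u | ‖u‖ = 1 ∧ (sideCount X u x : ℝ) / (n : ℝ) = depth X x}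

/-- `H_{x,y}`: the open hemisphere of unit directions `u` with `⟪u, x⟫ < ⟪u, y⟫`. -/
def HSet {d : ℕ} (x y : E d) : Set (E d) :=
  {u | ‖u‖ = 1 ∧ ⟪u, x⟫ < ⟪u, y⟫}

/-- `B_z`. -/
def BSet {d n : ℕ} (X : Fin n → E d) (z : E d) : Set (E d) :=
  {x | x ∈ MSet X ∧ USet X x ∩ HSet x z = ∅}

/-- `B̃_z = B_z \ {z}`. -/
def BTilde {d n : ℕ} (X : Fin n → E d) (z : E d) : Set (E d) :=
  BSet X z \ {z}

/-- `v` is a unit vector normal to an affine hyperplane spanned by `d` of the sample points. -/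
def normalToSampleHyperplane {d n : ℕ} (X : Fin n → E d) (v : E d) : Prop :=
  ‖v‖ = 1 ∧ ∃ (s : Finset (Fin n)) (c : ℝ), s.card = d ∧
    (affineSpan ℝ (X '' (s : Set (Fin n))) : Set (E d)) = {x : E d | ⟪v, x⟫ = c}

/-- Condition (2.1) on a unit direction `u`. -/
def cond21 {d n : ℕ} (X : Fin n → E d) (u : E d) : Prop :=
  ∀ v : E d, normalToSampleHyperplane X v → ⟪u, v⟫ ≠ 0

/-- `A` represents the columns of a `d × (d-1)` matrix which together with the unit
vector `u` form an orthonormal basis of `ℝ^d`. -/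
def IsAu {d : ℕ} (u : E d) (A : Fin (d - 1) → E d) : Prop :=
  ‖u‖ = 1 ∧ Orthonormal ℝ A ∧ ∀ j, ⟪A j, u⟫ = 0

/-- The `A_u`-projection `A_u^T x ∈ ℝ^{d-1}` of a point `x ∈ ℝ^d`. -/
def proj {d : ℕ} (A : Fin (d - 1) → E d) (x : E d) : E (d - 1) :=
  (WithLp.equiv 2 (Fin (d - 1) → ℝ)).symm (fun j => ⟪A j, x⟫)

/-- The embedding `A_u x = ∑ j x_j A_j ∈ ℝ^d` of a point `x ∈ ℝ^{d-1}`. -/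
def embed {d : ℕ} (A : Fin (d - 1) → E d) (x : E (d - 1)) : E d :=
  ∑ j, x j • A j

/-- `λ₀ = inf_{u ∈ S^{d-1}} λ*(X_u^n)`, the infimum over all directions of the maximum
Tukey depth of the projected sample. -/
def lambda0 {d n : ℕ} (X : Fin n → E d) : ℝ :=
  sInf {r : ℝ | ∃ (u : E d) (A : Fin (d - 1) → E d),
    IsAu u A ∧ r = maxDepth (fun i => proj A (X i))}

/-- The average (barycenter) of a set `K ⊆ ℝ^d`, taken with respect to the Hausdorff
measure of dimension equal to the affine dimension of `K`. -/
def setAverage {d : ℕ} (K : Set (E d)) : E d :=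
  (μH[(Module.finrank ℝ (affineSpan ℝ K).direction : ℝ)] K).toReal⁻¹ •
    ∫ x in K, x ∂(μH[(Module.finrank ℝ (affineSpan ℝ K).direction : ℝ)])

/-- Tukey's halfspace median: the average of all deepest points. -/
def TukeyMedian {d n : ℕ} (X : Fin n → E d) : E d :=
  setAverage (MSet X)

/-- `m` contaminating points suffice to break down the Tukey median at `X`. -/
def breaksDown {d n : ℕ} (X : Fin n → E d) (m : ℕ) : Prop :=
  ∀ C : ℝ, ∃ Y : Fin m → E d, C < ‖TukeyMedian (Fin.append X Y) - TukeyMedian X‖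

/-- The finite sample (additional) breakdown point of the Tukey median at `X`. -/
def FSBP {d n : ℕ} (X : Fin n → E d) : ℝ :=
  sInf {r : ℝ | ∃ m : ℕ, 1 ≤ m ∧ breaksDown X m ∧ r = (m : ℝ) / ((n : ℝ) + (m : ℝ))}

/-- **Lemma 2, o2.** For every `z ∈ B_{z₁}` one has `U_z ⊆ U_{z₁}`. -/
theorem lemma2_o2 {d n : ℕ} (hd : 2 ≤ d) (X : Fin n → E d)
    (hX : inGeneralPosition X) (hdim : affineSpan ℝ (MSet X) = ⊤)
    (z₁ : E d) (hz₁ : z₁ ∈ interior (MSet X)) (hB : (BTilde X z₁).Nonempty) :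
    ∀ z ∈ BSet X z₁, USet X z ⊆ USet X z₁ := by
  intro z hz u hu
  obtain ⟨hzM, hzU⟩ := hz
  obtain ⟨hu1, hudep⟩ := hu
  have hz₁M : z₁ ∈ MSet X := interior_subset hz₁
  -- u is not in H_{z,z₁}
  have hnotH : ¬ (⟪u, z⟫ < ⟪u, z₁⟫) := by
    intro h
    have : u ∈ USet X z ∩ HSet z z₁ := ⟨⟨hu1, hudep⟩, ⟨hu1, h⟩⟩
    rw [hzU] at this
    exact this
  have hle : ⟪u, z₁⟫ ≤ ⟪u, z⟫ := le_of_not_gt hnotH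
  -- sideCount monotone
  have hsc : sideCount X u z₁ ≤ sideCount X u z := by
    apply Set.ncard_le_ncard
    · intro i hi
      exact le_trans hi hle
    · exact Set.toFinite _
  have hscdiv : (sideCount X u z₁ : ℝ) / n ≤ (sideCount X u z : ℝ) / n := by
    rw [div_eq_mul_inv, div_eq_mul_inv]
    exact mul_le_mul_of_nonneg_right (by exact_mod_cast hsc) (by positivity)
  -- depth z₁ ≤ sideCount u z₁ / n
  have hbd : BddBelow {r : ℝ | ∃ v : E d, ‖v‖ = 1 ∧ r = (sideCount X v z₁ : ℝ) / n} := by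
    refine ⟨0, ?_⟩
    rintro r ⟨v, _, rfl⟩
    positivity
  have hmem : (sideCount X u z₁ : ℝ) / n ∈
      {r : ℝ | ∃ v : E d, ‖v‖ = 1 ∧ r = (sideCount X v z₁ : ℝ) / n} := ⟨u, hu1, rfl⟩
  have h1 : depth X z₁ ≤ (sideCount X u z₁ : ℝ) / n := csInf_le hbd hmem
  have h2 : (sideCount X u z₁ : ℝ) / n ≤ depth X z₁ := by
    calc (sideCount X u z₁ : ℝ) / n ≤ (sideCount X u z : ℝ) / n := hscdiv
      _ = depth X z := hudep
      _ = maxDepth X := hzM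
      _ = depth X z₁ := hz₁M.symm
  exact ⟨hu1, le_antisymm h2 h1⟩
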